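/- Suppose a sequence of random vectors satisfies Δ^{k+1} = G Δ^k where Δ^0 ∼ N(Δ_0, C) for a fixed vector Δ_0, C is symmetric positive definite, and G is a matrix with C^{-1/2} G^k C (Gᵀ)^k C^{-1/2} ⪯ β^k I for some β ∈ (0,1). Then E‖C^{-1/2}Δ^k‖² ≤ β^k · n · (1 + ‖C^{-1/2}Δ_0‖²), where n is the dimension. -/

import Mathlib

open Matrix

section PosSemidefSqrt

open scoped ComplexOrder

/-- The positive semidefinite square root of a positive semidefinite matrix
(removed from Mathlib; restored here with its December 2024 definition). -/
noncomputable def Matrix.PosSemidef.sqrt {n 𝕜 : Type*} [Fintype n] [DecidableEq n] [RCLike 𝕜]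
    {A : Matrix n n 𝕜} (hA : A.PosSemidef) : Matrix n n 𝕜 :=
  hA.1.eigenvectorUnitary.1 * diagonal ((↑) ∘ (√·) ∘ hA.1.eigenvalues) *
  (star hA.1.eigenvectorUnitary : Matrix n n 𝕜)

end PosSemidefSqrt

/-- if `Δ^{k} = G^k Δ^0` with `Δ^0 ∼ N(Δ_0, C)`, `C` symmetric positive definite,
and `C^{-1/2} G^k C (Gᵀ)^k C^{-1/2} ⪯ β^k I` for some `β ∈ (0,1)`, then
`E‖C^{-1/2} Δ^k‖² ≤ β^k n (1 + ‖C^{-1/2} Δ_0‖²)`.  Here the expectation is written out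
explicitly: since `Δ^k` is Gaussian with mean `G^k Δ_0` and covariance `G^k C (Gᵀ)^k`,
`E‖C^{-1/2} Δ^k‖² = ‖C^{-1/2} G^k Δ_0‖² + tr(C^{-1/2} G^k C (Gᵀ)^k C^{-1/2})`, and
`C^{-1/2}` is the inverse of the positive semidefinite square root of `C`. -/
theorem gaussian_iteration_error_bound
    {n : ℕ} (C G : Matrix (Fin n) (Fin n) ℝ) (hC : C.PosDef)
    (Δ₀ : Fin n → ℝ) (β : ℝ) (hβ0 : 0 < β) (hβ1 : β < 1)
    (hcontr : ∀ k : ℕ,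
      ((β ^ k) • (1 : Matrix (Fin n) (Fin n) ℝ) -
        hC.posSemidef.sqrt⁻¹ * G ^ k * C * (Gᵀ) ^ k * hC.posSemidef.sqrt⁻¹).PosSemidef)
    (k : ℕ) :
    (∑ i : Fin n, (hC.posSemidef.sqrt⁻¹ *ᵥ (G ^ k *ᵥ Δ₀)) i ^ 2) +
        (hC.posSemidef.sqrt⁻¹ * G ^ k * C * (Gᵀ) ^ k * hC.posSemidef.sqrt⁻¹).trace ≤
      β ^ k * n * (1 + ∑ i : Fin n, (hC.posSemidef.sqrt⁻¹ *ᵥ Δ₀) i ^ 2) := by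
  have dot_shift : ∀ (B : Matrix (Fin n) (Fin n) ℝ) (v w : Fin n → ℝ),
      v ⬝ᵥ (B *ᵥ w) = (Bᵀ *ᵥ v) ⬝ᵥ w := fun B v w => by
    rw [dotProduct_mulVec, mulVec_transpose]
  have CS : ∀ v w : Fin n → ℝ, (v ⬝ᵥ w) ^ 2 ≤ (v ⬝ᵥ v) * (w ⬝ᵥ w) := by
    intro v w
    simpa [dotProduct, sq, mul_mul_mul_comm] using
      Finset.sum_mul_sq_le_sq_mul_sq Finset.univ v w
  have dot_self_nonneg : ∀ v : Fin n → ℝ, 0 ≤ v ⬝ᵥ v := fun v =>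
    Finset.sum_nonneg fun i _ => mul_self_nonneg _
  set R := hC.posSemidef.sqrt with hRdef
  set S := R⁻¹ with hSdef
  have hRR : R * R = C := by
    have hU : (star hC.posSemidef.1.eigenvectorUnitary : Matrix (Fin n) (Fin n) ℝ) *
        hC.posSemidef.1.eigenvectorUnitary.1 = 1 := Unitary.coe_star_mul_self _
    conv_rhs => rw [hC.posSemidef.1.spectral_theorem]
    rw [hRdef, Matrix.PosSemidef.sqrt, Unitary.conjStarAlgAut_apply]
    simp only [Matrix.mul_assoc]
    rw [← Matrix.mul_assoc (star _ : Matrix (Fin n) (Fin n) ℝ) _ (diagonal _ * _), hU,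
      Matrix.one_mul, ← Matrix.mul_assoc (diagonal _) (diagonal _), diagonal_mul_diagonal]
    congr 3
    funext i
    simp [Real.mul_self_sqrt (hC.posSemidef.eigenvalues_nonneg i)]
  have hRdet : IsUnit R.det := by
    rw [isUnit_iff_ne_zero]
    intro h
    have hc : C.det = 0 := by rw [← hRR, det_mul, h, zero_mul]
    exact hC.det_pos.ne' hc
  have hRS : R * S = 1 := mul_nonsing_inv R hRdet
  have hRsym : Rᵀ = R := by
    rw [hRdef, Matrix.PosSemidef.sqrt]
    simp [transpose_mul, Matrix.star_eq_conjTranspose, Matrix.mul_assoc]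
  have hSsym : Sᵀ = S := by
    rw [hSdef, transpose_nonsing_inv, hRsym]
  set A := S * G ^ k * R with hAdef
  set M := S * G ^ k * C * (Gᵀ) ^ k * S with hMdef
  have hAt : Aᵀ = R * (Gᵀ) ^ k * S := by
    simp [hAdef, Matrix.transpose_mul, Matrix.transpose_pow, hRsym, hSsym, Matrix.mul_assoc]
  have hAAT : A * Aᵀ = M := by
    rw [hAt, hAdef, hMdef]
    simp only [Matrix.mul_assoc]
    rw [← Matrix.mul_assoc R R, hRR]
  have hPSD := (hcontr k).dotProduct_mulVec_nonneg
  have key : ∀ y : Fin n → ℝ, (Aᵀ *ᵥ y) ⬝ᵥ (Aᵀ *ᵥ y) ≤ β ^ k * (y ⬝ᵥ y) := by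
    intro y
    have h := hPSD y
    rw [star_trivial, sub_mulVec, dotProduct_sub, smul_mulVec, one_mulVec,
      dotProduct_smul, sub_nonneg] at h
    have hM : y ⬝ᵥ (M *ᵥ y) = (Aᵀ *ᵥ y) ⬝ᵥ (Aᵀ *ᵥ y) := by
      rw [← hAAT, ← mulVec_mulVec, dot_shift]
    calc (Aᵀ *ᵥ y) ⬝ᵥ (Aᵀ *ᵥ y) = y ⬝ᵥ (M *ᵥ y) := hM.symm
      _ ≤ β ^ k • (y ⬝ᵥ y) := h
      _ = β ^ k * (y ⬝ᵥ y) := by rw [smul_eq_mul]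
  have keyA : ∀ x : Fin n → ℝ, (A *ᵥ x) ⬝ᵥ (A *ᵥ x) ≤ β ^ k * (x ⬝ᵥ x) := by
    intro x
    set u := A *ᵥ x with hu
    have huu : u ⬝ᵥ u = (Aᵀ *ᵥ u) ⬝ᵥ x := by
      rw [hu]
      conv_lhs => rw [dot_shift]
    have h1 : (u ⬝ᵥ u) ^ 2 ≤ (β ^ k * (u ⬝ᵥ u)) * (x ⬝ᵥ x) := by
      calc (u ⬝ᵥ u) ^ 2 = ((Aᵀ *ᵥ u) ⬝ᵥ x) ^ 2 := by rw [huu]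
        _ ≤ ((Aᵀ *ᵥ u) ⬝ᵥ (Aᵀ *ᵥ u)) * (x ⬝ᵥ x) := CS _ _
        _ ≤ (β ^ k * (u ⬝ᵥ u)) * (x ⬝ᵥ x) :=
            mul_le_mul_of_nonneg_right (key u) (dot_self_nonneg x)
    rcases (dot_self_nonneg u).eq_or_lt with h0 | h0
    · rw [← h0]
      exact mul_nonneg (pow_pos hβ0 k).le (dot_self_nonneg x)
    · have := h1
      rw [sq] at this
      have h2 : (u ⬝ᵥ u) * (u ⬝ᵥ u) ≤ (β ^ k * (x ⬝ᵥ x)) * (u ⬝ᵥ u) := by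
        calc (u ⬝ᵥ u) * (u ⬝ᵥ u) ≤ (β ^ k * (u ⬝ᵥ u)) * (x ⬝ᵥ x) := this
          _ = (β ^ k * (x ⬝ᵥ x)) * (u ⬝ᵥ u) := by ring
      exact le_of_mul_le_mul_right h2 h0
  -- mean term
  set x := S *ᵥ Δ₀ with hx
  have hAx : A *ᵥ x = S *ᵥ (G ^ k *ᵥ Δ₀) := by
    rw [hx, mulVec_mulVec, mulVec_mulVec, hAdef, Matrix.mul_assoc (S * G ^ k) R S, hRS,
      Matrix.mul_one]
  have hmean : (∑ i : Fin n, (S *ᵥ (G ^ k *ᵥ Δ₀)) i ^ 2) ≤ β ^ k * (x ⬝ᵥ x) := by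
    have := keyA x
    rw [hAx] at this
    calc (∑ i : Fin n, (S *ᵥ (G ^ k *ᵥ Δ₀)) i ^ 2)
        = (S *ᵥ (G ^ k *ᵥ Δ₀)) ⬝ᵥ (S *ᵥ (G ^ k *ᵥ Δ₀)) := by simp [dotProduct, sq]
      _ ≤ β ^ k * (x ⬝ᵥ x) := this
  -- trace term
  have htr : M.trace ≤ β ^ k * n := by
    have hdiag : ∀ i : Fin n, 0 ≤ (β ^ k • (1 : Matrix (Fin n) (Fin n) ℝ) - M) i i := by
      intro i
      have h := hPSD (Pi.single i 1)
      simpa [dotProduct, mulVec, Pi.single_apply, mul_comm] using h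
    have : 0 ≤ (β ^ k • (1 : Matrix (Fin n) (Fin n) ℝ) - M).trace :=
      Finset.sum_nonneg fun i _ => hdiag i
    rw [trace_sub, trace_smul, trace_one, sub_nonneg] at this
    simpa [Fintype.card_fin, smul_eq_mul] using this
  have hxx : (∑ i : Fin n, (S *ᵥ Δ₀) i ^ 2) = x ⬝ᵥ x := by simp [hx, dotProduct, sq]
  rw [hxx]
  have hn : β ^ k * (x ⬝ᵥ x) ≤ β ^ k * n * (x ⬝ᵥ x) := by
    rcases Nat.eq_zero_or_pos n with h0 | h0
    · subst h0
      simp [dotProduct]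
    · have : (1 : ℝ) ≤ n := by exact_mod_cast h0
      have := mul_le_mul_of_nonneg_right (mul_le_mul_of_nonneg_left this (le_of_lt (pow_pos hβ0 k)))
        (dot_self_nonneg x)
      simpa [mul_one] using this
  calc (∑ i : Fin n, (S *ᵥ (G ^ k *ᵥ Δ₀)) i ^ 2) + M.trace
      ≤ β ^ k * (x ⬝ᵥ x) + β ^ k * n := add_le_add hmean htr
    _ ≤ β ^ k * n * (x ⬝ᵥ x) + β ^ k * n := add_le_add_left hn _
    _ = β ^ k * n * (1 + x ⬝ᵥ x) := by ring
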